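/- In L = ℚ(√−55) with ρ = (1+√−55)/2, the fourth power of the prime ideal ⟨2, ρ⟩ is the principal ideal generated by 2 − ρ, and the fourth power of ⟨2, 3+ρ⟩ is the principal ideal generated by 1 + ρ. -/
import Mathlib


open NumberField

lemma sq_span_pair_1 {R : Type*} [CommRing R] (ρ : R) (hρ : ρ ^ 2 - ρ + 14 = 0) :
    Ideal.span {(2 : R), ρ} ^ 2 = Ideal.span {4, ρ + 2} := by
  rw [pow_two, Ideal.span_pair_mul_span_pair]
  apply le_antisymm
  · rw [Ideal.span_le]
    intro x hx
    simp only [Set.mem_insert_iff, Set.mem_singleton_iff] at hx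
    rcases hx with rfl | rfl | rfl | rfl
    · exact Ideal.mem_span_pair.2 ⟨1, 0, by ring⟩
    · exact Ideal.mem_span_pair.2 ⟨-1, 2, by ring⟩
    · exact Ideal.mem_span_pair.2 ⟨-1, 2, by ring⟩
    · exact Ideal.mem_span_pair.2 ⟨-4, 1, by linear_combination -hρ⟩
  · rw [Ideal.span_le]
    intro x hx
    simp only [Set.mem_insert_iff, Set.mem_singleton_iff] at hx
    have h1 : (2 : R) * 2 ∈ Ideal.span {(2:R)*2, 2*ρ, ρ*2, ρ*ρ} :=
      Ideal.subset_span (Set.mem_insert _ _)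
    have h4 : ρ * ρ ∈ Ideal.span {(2:R)*2, 2*ρ, ρ*2, ρ*ρ} :=
      Ideal.subset_span (by simp)
    rcases hx with rfl | rfl
    · have : (4 : R) = 1 * (2 * 2) := by ring
      rw [this]; exact Ideal.mul_mem_left _ _ h1
    · have : ρ + 2 = 4 * (2 * 2) + ρ * ρ := by linear_combination -hρ
      rw [this]
      exact add_mem (Ideal.mul_mem_left _ _ h1) h4

lemma sq_span_pair_2 {R : Type*} [CommRing R] (ρ : R) (hρ : ρ ^ 2 - ρ + 14 = 0) :
    Ideal.span {(2 : R), 3 + ρ} ^ 2 = Ideal.span {4, ρ + 1} := by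
  rw [pow_two, Ideal.span_pair_mul_span_pair]
  apply le_antisymm
  · rw [Ideal.span_le]
    intro x hx
    simp only [Set.mem_insert_iff, Set.mem_singleton_iff] at hx
    rcases hx with rfl | rfl | rfl | rfl
    · exact Ideal.mem_span_pair.2 ⟨1, 0, by ring⟩
    · exact Ideal.mem_span_pair.2 ⟨1, 2, by ring⟩
    · exact Ideal.mem_span_pair.2 ⟨1, 2, by ring⟩
    · exact Ideal.mem_span_pair.2 ⟨-3, 7, by linear_combination -hρ⟩
  · rw [Ideal.span_le]
    intro x hx
    simp only [Set.mem_insert_iff, Set.mem_singleton_iff] at hx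
    have h1 : (2 : R) * 2 ∈ Ideal.span {(2:R)*2, 2*(3+ρ), (3+ρ)*2, (3+ρ)*(3+ρ)} :=
      Ideal.subset_span (Set.mem_insert _ _)
    have h2 : (2 : R) * (3+ρ) ∈ Ideal.span {(2:R)*2, 2*(3+ρ), (3+ρ)*2, (3+ρ)*(3+ρ)} :=
      Ideal.subset_span (by simp)
    have h4 : (3+ρ) * (3+ρ) ∈ Ideal.span {(2:R)*2, 2*(3+ρ), (3+ρ)*2, (3+ρ)*(3+ρ)} :=
      Ideal.subset_span (by simp)
    rcases hx with rfl | rfl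
    · have : (4 : R) = 1 * (2 * 2) := by ring
      rw [this]; exact Ideal.mul_mem_left _ _ h1
    · have : ρ + 1 = 6 * (2 * 2) + (-3) * (2 * (3 + ρ)) + (3 + ρ) * (3 + ρ) := by
        linear_combination -hρ
      rw [this]
      exact add_mem (add_mem (Ideal.mul_mem_left _ _ h1) (Ideal.mul_mem_left _ _ h2)) h4

lemma pow4_1 {R : Type*} [CommRing R] (ρ : R) (hρ : ρ ^ 2 - ρ + 14 = 0) :
    Ideal.span {(2 : R), ρ} ^ 4 = Ideal.span {2 - ρ} := by
  have : (4 : ℕ) = 2 * 2 := rfl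
  rw [this, pow_mul, sq_span_pair_1 ρ hρ, pow_two, Ideal.span_pair_mul_span_pair]
  apply le_antisymm
  · rw [Ideal.span_le]
    intro x hx
    simp only [Set.mem_insert_iff, Set.mem_singleton_iff] at hx
    rcases hx with rfl | rfl | rfl | rfl
    · exact Ideal.mem_span_singleton.2 ⟨1 + ρ, by linear_combination hρ⟩
    · exact Ideal.mem_span_singleton.2 ⟨ρ - 3, by linear_combination hρ⟩
    · exact Ideal.mem_span_singleton.2 ⟨ρ - 3, by linear_combination hρ⟩
    · exact Ideal.mem_span_singleton.2 ⟨-5, by linear_combination hρ⟩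
  · rw [Ideal.span_le]
    intro x hx
    simp only [Set.mem_singleton_iff] at hx
    subst hx
    have h1 : (4 : R) * 4 ∈ Ideal.span {(4:R)*4, 4*(ρ+2), (ρ+2)*4, (ρ+2)*(ρ+2)} :=
      Ideal.subset_span (Set.mem_insert _ _)
    have h2 : (4 : R) * (ρ+2) ∈ Ideal.span {(4:R)*4, 4*(ρ+2), (ρ+2)*4, (ρ+2)*(ρ+2)} :=
      Ideal.subset_span (by simp)
    have h4 : (ρ+2) * (ρ+2) ∈ Ideal.span {(4:R)*4, 4*(ρ+2), (ρ+2)*4, (ρ+2)*(ρ+2)} :=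
      Ideal.subset_span (by simp)
    have : 2 - ρ = (-1) * (4 * 4) + 1 * (4 * (ρ + 2)) + (-1) * ((ρ + 2) * (ρ + 2)) := by
      linear_combination hρ
    rw [this]
    exact add_mem (add_mem (Ideal.mul_mem_left _ _ h1) (Ideal.mul_mem_left _ _ h2))
      (Ideal.mul_mem_left _ _ h4)

lemma pow4_2 {R : Type*} [CommRing R] (ρ : R) (hρ : ρ ^ 2 - ρ + 14 = 0) :
    Ideal.span {(2 : R), 3 + ρ} ^ 4 = Ideal.span {1 + ρ} := by
  have : (4 : ℕ) = 2 * 2 := rfl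
  rw [this, pow_mul, sq_span_pair_2 ρ hρ, pow_two, Ideal.span_pair_mul_span_pair]
  apply le_antisymm
  · rw [Ideal.span_le]
    intro x hx
    simp only [Set.mem_insert_iff, Set.mem_singleton_iff] at hx
    rcases hx with rfl | rfl | rfl | rfl
    · exact Ideal.mem_span_singleton.2 ⟨2 - ρ, by linear_combination hρ⟩
    · exact Ideal.mem_span_singleton.2 ⟨4, by ring⟩
    · exact Ideal.mem_span_singleton.2 ⟨4, by ring⟩
    · exact Ideal.mem_span_singleton.2 ⟨ρ + 1, by ring⟩
  · rw [Ideal.span_le]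
    intro x hx
    simp only [Set.mem_singleton_iff] at hx
    subst hx
    have h1 : (4 : R) * 4 ∈ Ideal.span {(4:R)*4, 4*(ρ+1), (ρ+1)*4, (ρ+1)*(ρ+1)} :=
      Ideal.subset_span (Set.mem_insert _ _)
    have h2 : (4 : R) * (ρ+1) ∈ Ideal.span {(4:R)*4, 4*(ρ+1), (ρ+1)*4, (ρ+1)*(ρ+1)} :=
      Ideal.subset_span (by simp)
    have h4 : (ρ+1) * (ρ+1) ∈ Ideal.span {(4:R)*4, 4*(ρ+1), (ρ+1)*4, (ρ+1)*(ρ+1)} :=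
      Ideal.subset_span (by simp)
    have : 1 + ρ = (-1) * (4 * 4) + 1 * (4 * (ρ + 1)) + (-1) * ((ρ + 1) * (ρ + 1)) := by
      linear_combination hρ
    rw [this]
    exact add_mem (add_mem (Ideal.mul_mem_left _ _ h1) (Ideal.mul_mem_left _ _ h2))
      (Ideal.mul_mem_left _ _ h4)

theorem fourth_powers_principal (K : Type*) [Field K] [NumberField K]
    (hK : Module.finrank ℚ K = 2) (ρ : 𝓞 K) (hρ : ρ ^ 2 - ρ + 14 = 0) :
    Ideal.span {(2 : 𝓞 K), ρ} ^ 4 = Ideal.span {2 - ρ} ∧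
    Ideal.span {(2 : 𝓞 K), 3 + ρ} ^ 4 = Ideal.span {1 + ρ} :=
  ⟨pow4_1 ρ hρ, pow4_2 ρ hρ⟩
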